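/- Let Z(t) be the unique formal power series with Z = 1 + 4pqr·t³·Z³ (p,q,r positive reals with p+q+r=1). Then the discriminant Δ(x) = (1 − t/x)² − 4pqr·t²·x admits the factorization Δ(x) = Δ₀·Δ₊(x)·Δ₋(1/x) where Δ₀ = 1/Z², Δ₊(x) = 1 − 4pqr·t²Z²·x, and Δ₋(x̄) = 1 − tZ(1+Z)x̄ + t²Z²x̄², as an identity of Laurent polynomials in x with power series coefficients in t. -/

import Mathlib

open PowerSeries Polynomial

/-- Canonical factorization of the discriminant `Δ(x) = (1 − t/x)² − 4pqr·t²·x`: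
`Δ(x) = Δ₀·Δ₊(x)·Δ₋(1/x)` with `Δ₀ = 1/Z²`, `Δ₊(x) = 1 − 4pqr·t²Z²·x` and
`Δ₋(x̄) = 1 − tZ(1+Z)x̄ + t²Z²x̄²`, where `Z = 1 + 4pqr·t³·Z³`.  The identity of
Laurent polynomials in `x` is stated after multiplication by `x²`:
`(x−t)² − 4pqr·t²·x³ = Δ₀ · Δ₊(x) · (x² − tZ(1+Z)·x + t²Z²)`. -/
theorem discriminant_factorization (p q r : ℝ) (hp : 0 < p) (hq : 0 < q) (hr : 0 < r)
    (hsum : p + q + r = 1) (Z : PowerSeries ℝ)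
    (hZ : Z = 1 + PowerSeries.C (R := ℝ) (4 * p * q * r) * PowerSeries.X ^ 3 * Z ^ 3) :
    (Polynomial.X - Polynomial.C (PowerSeries.X : PowerSeries ℝ)) ^ 2 -
        Polynomial.C (PowerSeries.C (R := ℝ) (4 * p * q * r) * PowerSeries.X ^ 2) * Polynomial.X ^ 3 =
      Polynomial.C ((Z ^ 2)⁻¹) *
        (1 - Polynomial.C (PowerSeries.C (R := ℝ) (4 * p * q * r) * PowerSeries.X ^ 2 * Z ^ 2) *
          Polynomial.X) *
        (Polynomial.X ^ 2 -
          Polynomial.C (PowerSeries.X * Z * (1 + Z)) * Polynomial.X +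
          Polynomial.C (PowerSeries.X ^ 2 * Z ^ 2)) := by
  have hc : PowerSeries.constantCoeff Z = 1 := by
    conv_lhs => rw [hZ]
    simp
  have hc2 : PowerSeries.constantCoeff (Z ^ 2) ≠ 0 := by
    simp [hc]
  have hinv : (Z ^ 2)⁻¹ * Z ^ 2 = 1 := PowerSeries.inv_mul_cancel _ hc2
  have hinv' : Polynomial.C ((Z ^ 2)⁻¹) * Polynomial.C Z ^ 2 = 1 := by
    rw [← map_pow, ← map_mul, hinv, map_one]
  have e1 : PowerSeries.C (R := ℝ) (4 * p * q * r) * PowerSeries.X ^ 3 * Z ^ 3 = Z - 1 := by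
    rw [eq_sub_iff_add_eq, add_comm, ← hZ]
  have e1' : Polynomial.C (PowerSeries.C (R := ℝ) (4 * p * q * r)) *
      Polynomial.C (PowerSeries.X : PowerSeries ℝ) ^ 3 * Polynomial.C Z ^ 3 =
      Polynomial.C Z - 1 := by
    rw [← map_pow, ← map_pow, ← map_mul, ← map_mul, e1, map_sub, map_one]
  simp only [Polynomial.C_mul, Polynomial.C_pow, Polynomial.C_add, Polynomial.C_1]
  linear_combination
    (Polynomial.C (PowerSeries.C (R := ℝ) (4 * p * q * r)) *
        Polynomial.C (PowerSeries.X : PowerSeries ℝ) ^ 2 * Polynomial.X ^ 3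
      - Polynomial.X ^ 2
      + 2 * Polynomial.C (PowerSeries.X : PowerSeries ℝ) * Polynomial.X
      - Polynomial.C (PowerSeries.X : PowerSeries ℝ) ^ 2) * hinv'
    + (- Polynomial.C ((Z ^ 2)⁻¹) * (1 + Polynomial.C Z) * Polynomial.X ^ 2
      + Polynomial.C ((Z ^ 2)⁻¹) * Polynomial.C (PowerSeries.X : PowerSeries ℝ) *
        Polynomial.C Z * Polynomial.X) * e1'
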